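/- Let n ∈ ℕ be odd and of the form n = a² + 1 for some a ∈ ℕ. For H = B±(C_n), where C_n is a cyclic group of order n, one has a − 1 ∈ Δ*(H). (More precisely, if C_n = ⟨e⟩ and G₀ = {e, ae}, then min Δ(B±(G₀)) = a − 1.) -/

import Mathlib

open Multiset

variable {G : Type*} [AddCommGroup G]

/-- `S` is a plus-minus weighted zero-sum sequence: `S` splits as `S₁ + S₂` with
`S₁.sum = S₂.sum`, i.e. some choice of signs `ε_i ∈ {+1, -1}` makes the weighted sum vanish. -/
def IsPMZeroSum (S : Multiset G) : Prop :=
  ∃ S₁ S₂ : Multiset G, S = S₁ + S₂ ∧ S₁.sum = S₂.sum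

/-- The monoid `B±(G₀)` of plus-minus weighted zero-sum sequences over `G₀ ⊆ G`, as an
additive submonoid of the free commutative monoid `Multiset G` of sequences over `G`. -/
def PMZS (G₀ : Set G) : AddSubmonoid (Multiset G) where
  carrier := {S | (∀ g ∈ S, g ∈ G₀) ∧ IsPMZeroSum S}
  zero_mem' := ⟨fun g hg => absurd hg (Multiset.notMem_zero g), 0, 0, by simp, rfl⟩
  add_mem' := by
    rintro S T ⟨hS, S₁, S₂, rfl, h12⟩ ⟨hT, T₁, T₂, rfl, h34⟩
    exact ⟨fun g hg => (Multiset.mem_add.mp hg).elim (fun h => hS g h) (fun h => hT g h),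
      S₁ + T₁, S₂ + T₂, add_add_add_comm S₁ S₂ T₁ T₂, by simp [h12, h34]⟩

/-- `A` is an atom (irreducible element) of the submonoid `H` of `Multiset G`. -/
def IsPMAtom (H : AddSubmonoid (Multiset G)) (A : Multiset G) : Prop :=
  A ∈ H ∧ A ≠ 0 ∧ ∀ B C : Multiset G, B ∈ H → C ∈ H → A = B + C → B = 0 ∨ C = 0

/-- The set of lengths `L(a)` of `a` in `H`: all `k` such that `a` is a sum of `k` atoms of `H`. -/
def LengthSet (H : AddSubmonoid (Multiset G)) (a : Multiset G) : Set ℕ :=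
  {k | ∃ l : List (Multiset G), (∀ A ∈ l, IsPMAtom H A) ∧ l.sum = a ∧ l.length = k}

/-- The set of successive distances `Δ(L)` of a set `L ⊆ ℕ`. -/
def DistSet (L : Set ℕ) : Set ℕ :=
  {d | 0 < d ∧ ∃ a ∈ L, a + d ∈ L ∧ ∀ b ∈ L, a < b → a + d ≤ b}

/-- The set of distances `Δ(H) = ⋃_{a ∈ H} Δ(L(a))`. -/
def DeltaM (H : AddSubmonoid (Multiset G)) : Set ℕ :=
  {d | ∃ a ∈ H, d ∈ DistSet (LengthSet H a)}

/-- `a` divides `b` in `H`. -/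
def DvdIn (H : AddSubmonoid (Multiset G)) (a b : Multiset G) : Prop :=
  ∃ c ∈ H, b = a + c

/-- `S` is a divisor-closed submonoid of `H`. -/
def IsDivClosed (H S : AddSubmonoid (Multiset G)) : Prop :=
  S ≤ H ∧ ∀ s ∈ S, ∀ a ∈ H, DvdIn H a s → a ∈ S

/-- The set of minimal distances
`Δ*(H) = {min Δ(S) : S a divisor-closed submonoid of H with Δ(S) ≠ ∅}`. -/
def DeltaStar (H : AddSubmonoid (Multiset G)) : Set ℕ :=
  {d | ∃ S : AddSubmonoid (Multiset G), IsDivClosed H S ∧ (DeltaM S).Nonempty ∧ d = sInf (DeltaM S)}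

/-- The set of lengths of atoms of `H`. -/
def AtomLengths (H : AddSubmonoid (Multiset G)) : Set ℕ :=
  {n | ∃ A : Multiset G, IsPMAtom H A ∧ Multiset.card A = n}

/-- The Davenport constant `D(H)` of `H`: the supremum of the lengths of the atoms of `H`.  -/
noncomputable def DavD (H : AddSubmonoid (Multiset G)) : ℕ :=
  sSup (AtomLengths H)

/-- The system of sets of lengths `L(H)` of `H`. -/
def LSys (H : AddSubmonoid (Multiset G)) : Set (Set ℕ) :=
  {L | ∃ a ∈ H, L = LengthSet H a}

/-- `d` is the greatest common divisor of the set `S` of integers. -/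
def IsSetGCD (S : Set ℤ) (d : ℕ) : Prop :=
  (∀ x ∈ S, (d : ℤ) ∣ x) ∧ ∀ c : ℕ, (∀ x ∈ S, (c : ℤ) ∣ x) → c ∣ d

/-- A family `e` of elements of an abelian group is independent if `∑ c i • e i = 0`
with integer coefficients implies `c i • e i = 0` for each `i`. -/
def IsIndepFamily {k : ℕ} (e : Fin k → G) : Prop :=
  ∀ c : Fin k → ℤ, ∑ i, c i • e i = 0 → ∀ i, c i • e i = 0

/-- The (classical) Davenport constant of the abelian group `G`: the smallest `ℓ` such that
every sequence over `G` of length at least `ℓ` has a nonempty zero-sum subsequence. -/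
noncomputable def DavenportGroup (G : Type*) [AddCommGroup G] : ℕ :=
  sInf {ℓ | ∀ S : Multiset G, ℓ ≤ Multiset.card S → ∃ T, T ≤ S ∧ T ≠ 0 ∧ T.sum = 0}

section Stmt9Aux

open Multiset

variable {n a : ℕ} {e : ZMod n}

/-- Pair of multiplicities realised as a multiset over `{e, a•e}`. -/
def Mxy (e : ZMod n) (a x y : ℕ) : Multiset (ZMod n) :=
  replicate x e + replicate y (a • e)

/-- Arithmetic characterisation of plus-minus zero-sum for `Mxy`. -/
def Zp (n a x y : ℕ) : Prop :=
  ∃ p q : ℕ, p ≤ x ∧ q ≤ y ∧ (n : ℤ) ∣ ((2 * p - x) + (2 * q - y) * a : ℤ)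

lemma mem_PMZS {G : Type*} [AddCommGroup G] {G₀ : Set G} {S : Multiset G} :
    S ∈ PMZS G₀ ↔ (∀ g ∈ S, g ∈ G₀) ∧ IsPMZeroSum S := Iff.rfl

lemma nsmul_e_eq_iff (he : addOrderOf e = n) (u v : ℕ) :
    u • e = v • e ↔ (n : ℤ) ∣ ((u : ℤ) - v) := by
  rw [← natCast_zsmul, ← natCast_zsmul, ← sub_eq_zero, ← sub_smul]
  have h := addOrderOf_dvd_iff_zsmul_eq_zero (x := e) (i := (u : ℤ) - v)
  rw [he] at h
  exact h.symm

lemma e_ne_sm (he : addOrderOf e = n) (hn : n = a ^ 2 + 1) (ha2 : 2 ≤ a) :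
    e ≠ a • e := by
  intro h
  have h1 : (1 : ℕ) • e = a • e := by simpa using h
  rw [nsmul_e_eq_iff he] at h1
  have := Int.le_of_dvd (by push_cast; omega) (dvd_neg.mpr h1)
  push_cast at this; nlinarith

lemma count_e_Mxy (hne : e ≠ a • e) (x y : ℕ) : count e (Mxy e a x y) = x := by
  rw [Mxy, count_add, count_replicate_self, count_replicate,
    if_neg (fun h => hne h.symm), add_zero]

lemma count_g_Mxy (hne : e ≠ a • e) (x y : ℕ) : count (a • e) (Mxy e a x y) = y := by
  rw [Mxy, count_add, count_replicate, if_neg hne, count_replicate_self, zero_add]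

lemma card_Mxy (x y : ℕ) : Multiset.card (Mxy e a x y) = x + y := by
  simp [Mxy]

lemma Mxy_add (x₁ y₁ x₂ y₂ : ℕ) :
    Mxy e a (x₁ + x₂) (y₁ + y₂) = Mxy e a x₁ y₁ + Mxy e a x₂ y₂ := by
  simp only [Mxy, replicate_add]
  abel

lemma Mxy_eq_zero_iff (x y : ℕ) : Mxy e a x y = 0 ↔ x = 0 ∧ y = 0 := by
  constructor
  · intro h
    have := congrArg Multiset.card h
    rw [card_Mxy] at this
    simp at this; omega
  · rintro ⟨rfl, rfl⟩; simp [Mxy]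

lemma mem_Mxy (x y : ℕ) : ∀ b ∈ Mxy e a x y, b ∈ ({e, a • e} : Set (ZMod n)) := by
  intro b hb
  simp only [Mxy, Multiset.mem_add, mem_replicate] at hb
  rcases hb with ⟨-, rfl⟩ | ⟨-, rfl⟩ <;> simp

lemma eq_Mxy_of_subset (hne : e ≠ a • e) {S : Multiset (ZMod n)}
    (hS : ∀ b ∈ S, b ∈ ({e, a • e} : Set (ZMod n))) :
    S = Mxy e a (S.count e) (S.count (a • e)) := by
  ext b
  by_cases hbe : b = e
  · subst hbe; rw [count_e_Mxy hne]
  · by_cases hbg : b = a • e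
    · subst hbg; rw [count_g_Mxy hne]
    · have h1 : count b S = 0 := count_eq_zero.mpr (fun hb => by
        have := hS b hb
        rw [Set.mem_insert_iff, Set.mem_singleton_iff] at this; tauto)
      have h2 : count b (Mxy e a (S.count e) (S.count (a • e))) = 0 :=
        count_eq_zero.mpr (fun hb => by
          have := mem_Mxy _ _ b hb
          rw [Set.mem_insert_iff, Set.mem_singleton_iff] at this; tauto)
      rw [h1, h2]

lemma sum_Mxy (x y : ℕ) : (Mxy e a x y).sum = (x + y * a) • e := by
  simp only [Mxy, Multiset.sum_add, sum_replicate, add_smul, mul_smul]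

lemma coprime_na (hn : n = a ^ 2 + 1) : Nat.Coprime n a := by
  have h : n = a * a + 1 := by rw [hn]; ring
  rw [Nat.coprime_comm, h]
  simpa using (Nat.coprime_mul_left_add_right a a 1).mpr (Nat.coprime_one_right a)

lemma mem_PMZS_Mxy (he : addOrderOf e = n) (hn : n = a ^ 2 + 1) (ha2 : 2 ≤ a) (x y : ℕ) :
    Mxy e a x y ∈ PMZS ({e, a • e} : Set (ZMod n)) ↔ Zp n a x y := by
  have hne := e_ne_sm he hn ha2
  rw [mem_PMZS]
  constructor
  · rintro ⟨-, S₁, S₂, hsplit, hsum⟩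
    have hSsub : ∀ b ∈ S₁, b ∈ ({e, a • e} : Set (ZMod n)) := fun b hb =>
      mem_Mxy x y b (by rw [hsplit, Multiset.mem_add]; exact Or.inl hb)
    have hTsub : ∀ b ∈ S₂, b ∈ ({e, a • e} : Set (ZMod n)) := fun b hb =>
      mem_Mxy x y b (by rw [hsplit, Multiset.mem_add]; exact Or.inr hb)
    have h1 : S₁ = Mxy e a (S₁.count e) (S₁.count (a • e)) := eq_Mxy_of_subset hne hSsub
    have h2 : S₂ = Mxy e a (S₂.count e) (S₂.count (a • e)) := eq_Mxy_of_subset hne hTsub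
    have hcx : S₁.count e + S₂.count e = x := by
      have := congrArg (count e) hsplit
      rw [count_e_Mxy hne, count_add] at this
      omega
    have hcy : S₁.count (a • e) + S₂.count (a • e) = y := by
      have := congrArg (count (a • e)) hsplit
      rw [count_g_Mxy hne, count_add] at this
      omega
    refine ⟨S₁.count e, S₁.count (a • e), by omega, by omega, ?_⟩
    rw [h1, h2, sum_Mxy, sum_Mxy, nsmul_e_eq_iff he] at hsum
    have key : ((2 * (S₁.count e) - x) + (2 * (S₁.count (a • e)) - y) * a : ℤ) =
        ((S₁.count e + S₁.count (a • e) * a : ℕ) : ℤ) -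
        ((S₂.count e + S₂.count (a • e) * a : ℕ) : ℤ) := by
      have e1 : (x : ℤ) = S₁.count e + S₂.count e := by exact_mod_cast hcx.symm
      have e2 : (y : ℤ) = S₁.count (a • e) + S₂.count (a • e) := by exact_mod_cast hcy.symm
      push_cast
      rw [e1, e2]; ring
    rw [key]; exact hsum
  · rintro ⟨p, q, hp, hq, hdvd⟩
    refine ⟨mem_Mxy x y, Mxy e a p q, Mxy e a (x - p) (y - q), ?_, ?_⟩
    · rw [← Mxy_add]; congr 1 <;> omega
    · rw [sum_Mxy, sum_Mxy, nsmul_e_eq_iff he]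
      have e1 : ((x - p : ℕ) : ℤ) = (x : ℤ) - p := by omega
      have e2 : ((y - q : ℕ) : ℤ) = (y : ℤ) - q := by omega
      have key : ((p + q * a : ℕ) : ℤ) - (((x - p) + (y - q) * a : ℕ) : ℤ) =
          ((2 * p - x) + (2 * q - y) * a : ℤ) := by push_cast [e1, e2]; ring
      rw [key]; exact hdvd

lemma mem_H₀ (he : addOrderOf e = n) (hn : n = a ^ 2 + 1) (ha2 : 2 ≤ a)
    {S : Multiset (ZMod n)} (hS : S ∈ PMZS ({e, a • e} : Set (ZMod n))) :
    S = Mxy e a (S.count e) (S.count (a • e)) ∧ Zp n a (S.count e) (S.count (a • e)) := by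
  have hne := e_ne_sm he hn ha2
  have hrepr := eq_Mxy_of_subset hne (mem_PMZS.mp hS).1
  exact ⟨hrepr, (mem_PMZS_Mxy he hn ha2 _ _).mp (hrepr ▸ hS)⟩

lemma not_Zp_one (hn : n = a ^ 2 + 1) (ha2 : 2 ≤ a) (hae : 2 ∣ a) {y' : ℕ} (hy : y' < a) :
    ¬ Zp n a 1 y' := by
  rintro ⟨p, q, hp, hq, hdvd⟩
  have hN : (n : ℤ) = a * a + 1 := by rw [hn]; push_cast; ring
  set V : ℤ := (2 * p - 1) + (2 * q - y') * a with hV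
  have hV0 : V ≠ 0 := by
    intro h
    obtain ⟨b, hb⟩ := hae
    have hb' : (a : ℤ) = 2 * b := by exact_mod_cast hb
    rw [hV, hb'] at h
    have h2 : (2 * (p:ℤ) - 1) + 2 * ((2 * (q:ℤ) - y') * b) = 0 := by linear_combination h
    set w := (2 * (q:ℤ) - y') * (b:ℤ) with hw
    omega
  have hle : (n : ℤ) ≤ |V| := Int.le_of_dvd (abs_pos.mpr hV0) ((dvd_abs _ _).mpr hdvd)
  have h1 : |2 * (p:ℤ) - 1| ≤ 1 := abs_le.mpr ⟨by omega, by omega⟩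
  have h2 : |2 * (q:ℤ) - y'| ≤ (a:ℤ) - 1 := abs_le.mpr ⟨by omega, by omega⟩
  have h3 : |V| ≤ |2 * (p:ℤ) - 1| + |2 * (q:ℤ) - y'| * a := by
    calc |V| ≤ |2 * (p:ℤ) - 1| + |(2 * (q:ℤ) - y') * a| := abs_add_le _ _
    _ = |2 * (p:ℤ) - 1| + |2 * (q:ℤ) - y'| * a := by
        rw [abs_mul, abs_of_nonneg (by positivity : (0:ℤ) ≤ a)]
  have ha' : (0:ℤ) ≤ (a:ℤ) - 1 := by
    have h4 : (2:ℤ) ≤ a := by exact_mod_cast ha2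
    omega
  nlinarith [h3, hle, h1, h2]

lemma not_Zp_01 (hn : n = a ^ 2 + 1) (ha2 : 2 ≤ a) : ¬ Zp n a 0 1 := by
  rintro ⟨p, q, hp, hq, hdvd⟩
  have hp0 : p = 0 := by omega
  subst hp0
  have hN : (n : ℤ) = a * a + 1 := by rw [hn]; push_cast; ring
  have hd2 : (n:ℤ) ∣ (2 * (q:ℤ) - 1) * a := by
    convert hdvd using 1
    push_cast; ring
  have hco : IsCoprime (n:ℤ) (a:ℤ) := by
    rw [Int.isCoprime_iff_gcd_eq_one]
    exact_mod_cast coprime_na hn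
  have hd3 : (n:ℤ) ∣ (2 * (q:ℤ) - 1) := hco.dvd_of_dvd_mul_right hd2
  have hne : (2 * (q:ℤ) - 1) ≠ 0 := by omega
  have := Int.le_of_dvd (abs_pos.mpr hne) ((dvd_abs _ _).mpr hd3)
  have : |2 * (q:ℤ) - 1| ≤ 1 := abs_le.mpr ⟨by omega, by omega⟩
  nlinarith [Int.le_of_dvd (abs_pos.mpr hne) ((dvd_abs _ _).mpr hd3), this]

lemma no_card_one (he : addOrderOf e = n) (hn : n = a ^ 2 + 1) (ha2 : 2 ≤ a) (hae : 2 ∣ a)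
    {S : Multiset (ZMod n)} (hS : S ∈ PMZS ({e, a • e} : Set (ZMod n)))
    (hc : Multiset.card S = 1) : False := by
  obtain ⟨hrepr, hZ⟩ := mem_H₀ he hn ha2 hS
  have hcard : S.count e + S.count (a • e) = 1 := by
    have := congrArg Multiset.card hrepr
    rw [card_Mxy] at this; omega
  rcases Nat.eq_zero_or_pos (S.count e) with h | h
  · have h1 : S.count (a • e) = 1 := by omega
    rw [h, h1] at hZ
    exact not_Zp_01 hn ha2 hZ
  · have h0 : S.count e = 1 := by omega
    have h1 : S.count (a • e) = 0 := by omega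
    rw [h0, h1] at hZ
    exact not_Zp_one hn ha2 hae (by omega : 0 < a) hZ

lemma atom_of_card_two (he : addOrderOf e = n) (hn : n = a ^ 2 + 1) (ha2 : 2 ≤ a) (hae : 2 ∣ a)
    {S : Multiset (ZMod n)} (hS : S ∈ PMZS ({e, a • e} : Set (ZMod n)))
    (hc : Multiset.card S = 2) : IsPMAtom (PMZS ({e, a • e} : Set (ZMod n))) S := by
  refine ⟨hS, fun h => by simp [h] at hc, fun B C hB hC hBC => ?_⟩
  by_contra hcon
  push_neg at hcon
  have hcBC : Multiset.card B + Multiset.card C = 2 := by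
    have := congrArg Multiset.card hBC
    rw [Multiset.card_add] at this; omega
  have hB1 : Multiset.card B = 1 := by
    have h1 : Multiset.card B ≠ 0 := fun h => hcon.1 (Multiset.card_eq_zero.mp h)
    have h2 : Multiset.card C ≠ 0 := fun h => hcon.2 (Multiset.card_eq_zero.mp h)
    omega
  exact no_card_one he hn ha2 hae hB hB1

lemma Zp_20 : Zp n a 2 0 := ⟨1, 0, by omega, by omega, ⟨0, by push_cast; ring⟩⟩
lemma Zp_02 : Zp n a 0 2 := ⟨0, 1, by omega, by omega, ⟨0, by push_cast; ring⟩⟩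
lemma Zp_1a (hn : n = a ^ 2 + 1) : Zp n a 1 a :=
  ⟨1, a, le_rfl, le_rfl, ⟨1, by push_cast [hn]; ring⟩⟩

lemma atom_M20 (he : addOrderOf e = n) (hn : n = a ^ 2 + 1) (ha2 : 2 ≤ a) (hae : 2 ∣ a) :
    IsPMAtom (PMZS ({e, a • e} : Set (ZMod n))) (Mxy e a 2 0) :=
  atom_of_card_two he hn ha2 hae ((mem_PMZS_Mxy he hn ha2 2 0).mpr Zp_20) (card_Mxy 2 0)

lemma atom_M02 (he : addOrderOf e = n) (hn : n = a ^ 2 + 1) (ha2 : 2 ≤ a) (hae : 2 ∣ a) :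
    IsPMAtom (PMZS ({e, a • e} : Set (ZMod n))) (Mxy e a 0 2) :=
  atom_of_card_two he hn ha2 hae ((mem_PMZS_Mxy he hn ha2 0 2).mpr Zp_02) (card_Mxy 0 2)

lemma atom_M1a (he : addOrderOf e = n) (hn : n = a ^ 2 + 1) (ha2 : 2 ≤ a) (hae : 2 ∣ a) :
    IsPMAtom (PMZS ({e, a • e} : Set (ZMod n))) (Mxy e a 1 a) := by
  have hne := e_ne_sm he hn ha2
  refine ⟨(mem_PMZS_Mxy he hn ha2 1 a).mpr (Zp_1a hn), ?_, fun B C hB hC hBC => ?_⟩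
  · intro h
    rw [Mxy_eq_zero_iff] at h
    omega
  by_contra hcon
  push_neg at hcon
  obtain ⟨hBr, hBZ⟩ := mem_H₀ he hn ha2 hB
  obtain ⟨hCr, hCZ⟩ := mem_H₀ he hn ha2 hC
  have hcx : B.count e + C.count e = 1 := by
    have := congrArg (count e) hBC
    rw [count_e_Mxy hne, count_add] at this; omega
  have hcy : B.count (a • e) + C.count (a • e) = a := by
    have := congrArg (count (a • e)) hBC
    rw [count_g_Mxy hne, count_add] at this; omega
  rcases Nat.eq_zero_or_pos (B.count e) with h | h
  · -- B = (0, qb) with qb ≥ 1, C = (1, a - qb)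
    have hqb : 1 ≤ B.count (a • e) := by
      by_contra h'
      exact hcon.1 (by rw [hBr, h, Nat.eq_zero_of_not_pos h']; simp [Mxy])
    have hce : C.count e = 1 := by omega
    rw [hce] at hCZ
    exact not_Zp_one hn ha2 hae (by omega) hCZ
  · have hce : B.count e = 1 := by omega
    have hqc : 1 ≤ C.count (a • e) := by
      by_contra h'
      exact hcon.2 (by rw [hCr, (by omega : C.count e = 0), Nat.eq_zero_of_not_pos h']; simp [Mxy])
    rw [hce] at hBZ
    exact not_Zp_one hn ha2 hae (by omega) hBZ

lemma atom_card_mod (he : addOrderOf e = n) (hn : n = a ^ 2 + 1) (ha2 : 2 ≤ a) (hae : 2 ∣ a)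
    {A : Multiset (ZMod n)} (hA : IsPMAtom (PMZS ({e, a • e} : Set (ZMod n))) A) :
    Multiset.card A ≡ 2 [MOD a - 1] := by
  have hne := e_ne_sm he hn ha2
  have hn' : n = a * a + 1 := by rw [hn]; ring
  have hN : (n : ℤ) = (a:ℤ) * a + 1 := by exact_mod_cast hn'
  have hA1 : 1 ≡ a [MOD a - 1] := (Nat.modEq_iff_dvd' (by omega)).mpr ⟨1, by omega⟩
  have key : ∀ u v : ℕ, u + v * a ≡ u + v [MOD a - 1] := fun u v =>
    Nat.ModEq.add_left u (by simpa using (hA1.mul_left v).symm)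
  have hn2 : n ≡ 2 [MOD a - 1] := by
    have h2 : (2:ℕ) ≡ n [MOD a - 1] := by
      calc (2:ℕ) = 1 * 1 + 1 := by ring
        _ ≡ a * a + 1 [MOD a - 1] := (hA1.mul hA1).add_right 1
        _ = n := hn'.symm
    exact h2.symm
  obtain ⟨hmem, hA0, hmin⟩ := hA
  obtain ⟨x, y, hrepr, hZ⟩ : ∃ x y : ℕ, A = Mxy e a x y ∧ Zp n a x y := by
    obtain ⟨h1, h2⟩ := mem_H₀ he hn ha2 hmem
    exact ⟨_, _, h1, h2⟩
  have hcard : Multiset.card A = x + y := by rw [hrepr, card_Mxy]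
  have hxy0 : ¬(x = 0 ∧ y = 0) := by
    rintro ⟨h1, h2⟩
    rw [h1, h2] at hrepr
    exact hA0 (by rw [hrepr]; simp [Mxy])
  have hsplit : ∀ x₁ y₁ x₂ y₂ : ℕ, x = x₁ + x₂ → y = y₁ + y₂ → Zp n a x₁ y₁ → Zp n a x₂ y₂ →
      ¬(x₁ = 0 ∧ y₁ = 0) → ¬(x₂ = 0 ∧ y₂ = 0) → False := by
    intro x₁ y₁ x₂ y₂ hxe hye h1 h2 n1 n2
    rcases hmin (Mxy e a x₁ y₁) (Mxy e a x₂ y₂)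
      ((mem_PMZS_Mxy he hn ha2 _ _).mpr h1) ((mem_PMZS_Mxy he hn ha2 _ _).mpr h2)
      (by rw [hrepr, hxe, hye, Mxy_add]) with h | h
    · exact n1 ((Mxy_eq_zero_iff _ _).mp h)
    · exact n2 ((Mxy_eq_zero_iff _ _).mp h)
  rw [hcard]
  obtain ⟨p, q, hp, hq, hdvd⟩ := hZ
  -- Step 1: remove slack in p
  by_cases hps : 0 < p ∧ p < x
  · by_cases hc : x = 2 ∧ y = 0
    · rw [hc.1, hc.2]
    · refine (hsplit 2 0 (x - 2) y (by omega) (by omega) Zp_20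
        ⟨p - 1, q, by omega, by omega, ?_⟩ (by omega) (by omega)).elim
      convert hdvd using 1
      have e1 : ((p - 1 : ℕ) : ℤ) = (p:ℤ) - 1 := by omega
      have e2 : ((x - 2 : ℕ) : ℤ) = (x:ℤ) - 2 := by omega
      rw [e1, e2]; push_cast; ring
  by_cases hqs : 0 < q ∧ q < y
  · by_cases hc : x = 0 ∧ y = 2
    · rw [hc.1, hc.2]
    · refine (hsplit 0 2 x (y - 2) (by omega) (by omega) Zp_02
        ⟨p, q - 1, by omega, by omega, ?_⟩ (by omega) (by omega)).elim
      convert hdvd using 1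
      have e1 : ((q - 1 : ℕ) : ℤ) = (q:ℤ) - 1 := by omega
      have e2 : ((y - 2 : ℕ) : ℤ) = (y:ℤ) - 2 := by omega
      rw [e1, e2]; push_cast; ring
  -- Step 2: tight witnesses
  have hpe : p = 0 ∨ p = x := by omega
  have hqe : q = 0 ∨ q = y := by omega
  clear hps hqs hp hq
  have hPM : (n:ℤ) ∣ ((x:ℤ) + y * a) ∨ (n:ℤ) ∣ ((x:ℤ) - y * a) := by
    rcases hpe with rfl | rfl <;> rcases hqe with rfl | rfl
    · left; rw [← Int.dvd_neg]; convert hdvd using 1; push_cast; ring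
    · right; rw [← Int.dvd_neg]; convert hdvd using 1; push_cast; ring
    · right; convert hdvd using 1; push_cast; ring
    · left; convert hdvd using 1; push_cast; ring
  clear hdvd hpe hqe
  -- Case x = 0
  by_cases hx0 : x = 0
  · subst hx0
    have hdy : n ∣ y * a := by
      have h' : (n:ℤ) ∣ ((y:ℤ) * a) := by
        rcases hPM with h | h
        · convert h using 1; push_cast; ring
        · rw [← Int.dvd_neg]; convert h using 1; push_cast; ring
      exact_mod_cast h'
    obtain ⟨m, rfl⟩ := (coprime_na hn).dvd_of_dvd_mul_right hdy
    rcases Nat.lt_or_ge m 2 with hm | hm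
    · have hm1 : m = 1 := by
        rcases Nat.eq_zero_or_pos m with h | h
        · exact absurd ⟨rfl, by rw [h, mul_zero]⟩ hxy0
        · omega
      rw [hm1, mul_one]
      simpa using hn2
    · have haux : n * 2 ≤ n * m := Nat.mul_le_mul_left n hm
      have hnn : 1 ≤ n := by omega
      refine (hsplit 0 n 0 (n * m - n) (by omega) (by omega)
        ⟨0, n, le_rfl, le_rfl, ⟨a, by push_cast; try ring⟩⟩
        ⟨0, n * m - n, le_rfl, le_rfl, ⟨((m:ℤ) - 1) * a, ?_⟩⟩
        (by omega) (by omega)).elim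
      have e1 : ((n * m - n : ℕ) : ℤ) = (n:ℤ) * m - n := by
        have : ((n * m : ℕ) : ℤ) = (n:ℤ) * m := by push_cast; ring
        omega
      rw [e1]; push_cast; ring
  -- Case y = 0
  by_cases hy0 : y = 0
  · subst hy0
    have hdx : n ∣ x := by
      have h' : (n:ℤ) ∣ (x:ℤ) := by
        rcases hPM with h | h
        · convert h using 1; push_cast; ring
        · convert h using 1; push_cast; ring
      exact_mod_cast h'
    obtain ⟨m, rfl⟩ := hdx
    rcases Nat.lt_or_ge m 2 with hm | hm
    · have hm1 : m = 1 := by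
        rcases Nat.eq_zero_or_pos m with h | h
        · exact absurd ⟨by rw [h, mul_zero], rfl⟩ hxy0
        · omega
      rw [hm1, mul_one]
      simpa using hn2
    · have haux : n * 2 ≤ n * m := Nat.mul_le_mul_left n hm
      have hnn : 1 ≤ n := by omega
      refine (hsplit n 0 (n * m - n) 0 (by omega) (by omega)
        ⟨n, 0, le_rfl, le_rfl, ⟨1, by push_cast; try ring⟩⟩
        ⟨n * m - n, 0, le_rfl, le_rfl, ⟨(m:ℤ) - 1, ?_⟩⟩
        (by omega) (by omega)).elim
      have e1 : ((n * m - n : ℕ) : ℤ) = (n:ℤ) * m - n := by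
        have : ((n * m : ℕ) : ℤ) = (n:ℤ) * m := by push_cast; ring
        omega
      rw [e1]; push_cast; ring
  -- Now x ≥ 1, y ≥ 1
  have hx1 : 1 ≤ x := by omega
  have hy1 : 1 ≤ y := by omega
  rcases hPM with hP | hM
  · -- Plus case : n ∣ x + y*a
    have hd : n ∣ x + y * a := by
      have h' : (n:ℤ) ∣ ((x + y * a : ℕ) : ℤ) := by push_cast; exact hP
      exact_mod_cast h'
    obtain ⟨k, hk⟩ := hd
    have hkZ : (x:ℤ) + y * a = n * k := by exact_mod_cast hk
    have hk1 : 1 ≤ k := by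
      rcases Nat.eq_zero_or_pos k with h | h
      · rw [h, mul_zero] at hk; omega
      · omega
    by_cases hk2 : k = 1
    · rw [hk2, mul_one] at hk
      exact (key x y).symm.trans (by rw [hk]; exact hn2)
    · have hk2' : 2 ≤ k := by omega
      rcases Nat.lt_or_ge y a with hya | hya
      · -- y < a : x > n
        have haux1 : y * a ≤ (a - 1) * a := Nat.mul_le_mul_right a (by omega)
        have haux2 : (a - 1) * a = a * a - a := by rw [Nat.sub_mul, one_mul]
        have haux3 : n * 2 ≤ n * k := Nat.mul_le_mul_left n hk2'
        have hbig : n + 1 ≤ x := by omega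
        refine (hsplit n 0 (x - n) y (by omega) (by omega)
          ⟨n, 0, le_rfl, le_rfl, ⟨1, by push_cast; try ring⟩⟩
          ⟨x - n, y, le_rfl, le_rfl, ⟨(k:ℤ) - 1, ?_⟩⟩
          (by omega) (by omega)).elim
        have e1 : ((x - n : ℕ) : ℤ) = (x:ℤ) - n := by omega
        rw [e1]; push_cast
        linear_combination hkZ
      · -- y ≥ a
        have haux3 : n * 2 ≤ n * k := Nat.mul_le_mul_left n hk2'
        refine (hsplit 1 a (x - 1) (y - a) (by omega) (by omega) (Zp_1a hn)
          ⟨x - 1, y - a, le_rfl, le_rfl, ⟨(k:ℤ) - 1, ?_⟩⟩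
          (by omega) ?_).elim
        · have e1 : ((x - 1 : ℕ) : ℤ) = (x:ℤ) - 1 := by omega
          have e2 : ((y - a : ℕ) : ℤ) = (y:ℤ) - a := by omega
          rw [e1, e2]; push_cast
          linear_combination hkZ + hN
        · rintro ⟨h1, h2⟩
          have hxx : x = 1 := by omega
          have hyy : y = a := by omega
          rw [hxx, hyy] at hk
          omega
  · -- Minus case : n ∣ x - y*a
    rcases Nat.lt_trichotomy x (y * a) with hlt | heq | hgt
    · -- x < y*a : y*a = x + n*k, k ≥ 1
      have hd : n ∣ y * a - x := by
        have h' : (n:ℤ) ∣ ((y * a - x : ℕ) : ℤ) := by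
          rw [← Int.dvd_neg]
          convert hM using 1
          have e1 : ((y * a - x : ℕ) : ℤ) = (y:ℤ) * a - x := by
            have : ((y * a : ℕ) : ℤ) = (y:ℤ) * a := by push_cast; ring
            omega
          rw [e1]; ring
        exact_mod_cast h'
      obtain ⟨k, hk⟩ := hd
      have hk' : y * a = x + n * k := by omega
      have hkZ : (y:ℤ) * a = x + n * k := by exact_mod_cast hk'
      have hk1 : 1 ≤ k := by
        rcases Nat.eq_zero_or_pos k with h | h
        · rw [h, mul_zero] at hk'; omega
        · omega
      have hnk1 : n * 1 ≤ n * k := Nat.mul_le_mul_left n hk1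
      by_cases hxa : a - 1 ≤ x
      · -- x ≥ a - 1 forces y ≥ a + 1
        have hya1 : a + 1 ≤ y := by
          by_contra h'
          have hyle : y ≤ a := by omega
          have : y * a ≤ a * a := Nat.mul_le_mul_right a hyle
          omega
        by_cases hend : x = a - 1 ∧ y = a + 1
        · rw [hend.1, hend.2]
          have h2a : a - 1 + (a + 1) = 2 * a := by omega
          rw [h2a]
          exact ((Nat.modEq_iff_dvd' (by omega)).mpr ⟨2, by omega⟩).symm
        · refine (hsplit (a - 1) (a + 1) (x - (a - 1)) (y - (a + 1)) (by omega) (by omega)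
            ⟨0, a + 1, by omega, le_rfl, ⟨1, ?_⟩⟩
            ⟨0, y - (a + 1), by omega, le_rfl, ⟨(k:ℤ) - 1, ?_⟩⟩
            (by omega) (fun ⟨h1, h2⟩ => hend ⟨by omega, by omega⟩)).elim
          · have e1 : ((a - 1 : ℕ) : ℤ) = (a:ℤ) - 1 := by omega
            rw [e1]; push_cast
            linear_combination -hN
          · have e1 : ((x - (a - 1) : ℕ) : ℤ) = (x:ℤ) - a + 1 := by omega
            have e2 : ((y - (a + 1) : ℕ) : ℤ) = (y:ℤ) - a - 1 := by omega
            rw [e1, e2]; push_cast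
            linear_combination hkZ + hN
      · -- 1 ≤ x ≤ a - 2
        have hxle : x ≤ a - 2 := by omega
        have hac : (a:ℤ) ∣ ((x:ℤ) + k) := ⟨(y:ℤ) - a * k, by linear_combination -hkZ - (k:ℤ) * hN⟩
        obtain ⟨c, hc⟩ := hac
        have hc1 : 1 ≤ c := by nlinarith [hc, (by exact_mod_cast ha2 : (2:ℤ) ≤ a),
          (by exact_mod_cast hx1 : (1:ℤ) ≤ x), (by exact_mod_cast hk1 : (1:ℤ) ≤ k)]
        have hy' : (y:ℤ) = n * c - a * x := by
          have haZ : (0:ℤ) < a := by exact_mod_cast (by omega : 0 < a)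
          have hm : (y:ℤ) * a = (n * c - a * x) * a := by
            linear_combination hkZ + (n:ℤ) * hc - (x:ℤ) * hN
          exact mul_right_cancel₀ (by omega) hm
        by_cases hcc : c = 1
        · -- minimal case : conclude congruence
          rw [hcc, mul_one] at hy'
          have hidZ : ((x:ℤ) + y) + x * a = x + n := by linear_combination hy'
          have hid : (x + y) + x * a = x + n := by exact_mod_cast hidZ
          have h1 : (x + y) + x ≡ x + 2 [MOD a - 1] :=
            ((key (x + y) x).symm.trans (by rw [hid])).trans (Nat.ModEq.add_left x hn2)
          rw [add_comm (x + y) x] at h1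
          exact Nat.ModEq.add_left_cancel' x h1
        · -- c ≥ 2 : split off (x, n - a*x) and (0, n*(c-1))
          have hc2 : 2 ≤ c := by omega
          have haux1 : a * x ≤ a * (a - 2) := Nat.mul_le_mul_left a hxle
          have haux2 : a * (a - 2) + a * 2 = a * a := by rw [← Nat.mul_add]; congr 1; omega
          have haxn : a * x + 2 * a ≤ n - 1 := by omega
          set cN := c.toNat with hcN
          have hcNZ : (cN:ℤ) = c := Int.toNat_of_nonneg (by omega)
          have hcN2 : 2 ≤ cN := by omega
          have e0 : ((n - a * x : ℕ) : ℤ) = (n:ℤ) - a * x := by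
            have : ((a * x : ℕ) : ℤ) = (a:ℤ) * x := by push_cast; ring
            omega
          have hyN : y = (n - a * x) + n * (cN - 1) := by
            have e1 : ((cN - 1 : ℕ) : ℤ) = (cN:ℤ) - 1 := by omega
            have h2 : (y:ℤ) = (((n - a * x) + n * (cN - 1) : ℕ) : ℤ) := by
              push_cast [e0, e1, hcNZ]
              linear_combination hy'
            exact_mod_cast h2
          have hnc1 : 1 ≤ n * (cN - 1) := by
            have : n * 1 ≤ n * (cN - 1) := Nat.mul_le_mul_left n (by omega)
            omega
          refine (hsplit x (n - a * x) 0 (n * (cN - 1)) (by omega) (by omega)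
            ⟨0, n - a * x, by omega, le_rfl, ⟨(a:ℤ) - x, ?_⟩⟩
            ⟨0, n * (cN - 1), le_rfl, le_rfl, ⟨((cN:ℤ) - 1) * a, ?_⟩⟩
            (by omega) (by omega)).elim
          · rw [e0]; push_cast
            linear_combination (x:ℤ) * hN
          · have e1 : ((n * (cN - 1) : ℕ) : ℤ) = (n:ℤ) * ((cN:ℤ) - 1) := by
              have e2 : ((cN - 1 : ℕ) : ℤ) = (cN:ℤ) - 1 := by omega
              push_cast [e2]; ring
            rw [e1]; push_cast; ring
    · -- x = y*a
      rcases Nat.lt_or_ge y 2 with hy2 | hy2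
      · have hyy : y = 1 := by omega
        rw [hyy, one_mul] at heq
        rw [heq, hyy]
        have h2a : a + 1 ≡ 2 [MOD a - 1] := ((Nat.modEq_iff_dvd' (by omega)).mpr ⟨1, by omega⟩).symm
        exact h2a
      · have haux : 2 * a ≤ y * a := Nat.mul_le_mul_right a hy2
        have heqZ : (x:ℤ) = (y:ℤ) * a := by exact_mod_cast heq
        refine (hsplit a 1 (x - a) (y - 1) (by omega) (by omega)
          ⟨a, 0, le_rfl, by omega, ⟨0, by push_cast; try ring⟩⟩
          ⟨x - a, 0, le_rfl, by omega, ⟨0, ?_⟩⟩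
          (by omega) (by omega)).elim
        have e1 : ((x - a : ℕ) : ℤ) = (x:ℤ) - a := by omega
        have e2 : ((y - 1 : ℕ) : ℤ) = (y:ℤ) - 1 := by omega
        rw [e1, e2]; push_cast
        linear_combination heqZ
    · -- x > y*a : x = y*a + n*k
      have hd : n ∣ x - y * a := by
        have h' : (n:ℤ) ∣ ((x - y * a : ℕ) : ℤ) := by
          convert hM using 1
          have : ((y * a : ℕ) : ℤ) = (y:ℤ) * a := by push_cast; ring
          omega
        exact_mod_cast h'
      obtain ⟨k, hk⟩ := hd
      have hk' : x = y * a + n * k := by omega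
      have hkZ : (x:ℤ) = y * a + n * k := by exact_mod_cast hk'
      have hk1 : 1 ≤ k := by
        rcases Nat.eq_zero_or_pos k with h | h
        · rw [h, mul_zero] at hk'; omega
        · omega
      have hnk1 : n * 1 ≤ n * k := Nat.mul_le_mul_left n hk1
      have haux : 1 * a ≤ y * a := Nat.mul_le_mul_right a hy1
      refine (hsplit a 1 (x - a) (y - 1) (by omega) (by omega)
        ⟨a, 0, le_rfl, by omega, ⟨0, by push_cast; try ring⟩⟩
        ⟨x - a, 0, le_rfl, by omega, ⟨(k:ℤ), ?_⟩⟩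
        (by omega) (by omega)).elim
      have e1 : ((x - a : ℕ) : ℤ) = (x:ℤ) - a := by omega
      have e2 : ((y - 1 : ℕ) : ℤ) = (y:ℤ) - 1 := by omega
      rw [e1, e2]; push_cast
      linear_combination hkZ

lemma list_len_mod (he : addOrderOf e = n) (hn : n = a ^ 2 + 1) (ha2 : 2 ≤ a) (hae : 2 ∣ a) :
    ∀ l : List (Multiset (ZMod n)),
      (∀ A ∈ l, IsPMAtom (PMZS ({e, a • e} : Set (ZMod n))) A) →
      2 * l.length ≡ Multiset.card l.sum [MOD a - 1] := by
  intro l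
  induction l with
  | nil => intro _; simp; rfl
  | cons A l ih =>
    intro hl
    have h1 := ih (fun B hB => hl B (List.mem_cons_of_mem A hB))
    have h2 := atom_card_mod he hn ha2 hae (hl A List.mem_cons_self)
    have h3 : 2 * (A :: l).length = 2 + 2 * l.length := by
      rw [List.length_cons]; ring
    have h4 : Multiset.card (A :: l).sum = Multiset.card A + Multiset.card (l.sum) := by
      rw [List.sum_cons, Multiset.card_add]
    rw [h3, h4]
    exact Nat.ModEq.add h2.symm h1 |>.symm.symm
  
lemma lengths_congr (he : addOrderOf e = n) (hn : n = a ^ 2 + 1) (ha2 : 2 ≤ a) (hae : 2 ∣ a)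
    {S : Multiset (ZMod n)} {k k' : ℕ}
    (hk : k ∈ LengthSet (PMZS ({e, a • e} : Set (ZMod n))) S)
    (hk' : k' ∈ LengthSet (PMZS ({e, a • e} : Set (ZMod n))) S) :
    k ≡ k' [MOD a - 1] := by
  obtain ⟨l, hl, hsum, hlen⟩ := hk
  obtain ⟨l', hl', hsum', hlen'⟩ := hk'
  have h1 := list_len_mod he hn ha2 hae l hl
  have h2 := list_len_mod he hn ha2 hae l' hl'
  rw [hsum, hlen] at h1
  rw [hsum', hlen'] at h2
  have h3 : 2 * k ≡ 2 * k' [MOD a - 1] := h1.trans h2.symm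
  have hco : Nat.Coprime (a - 1) 2 := by
    rw [Nat.coprime_two_right]
    obtain ⟨b, rfl⟩ := hae
    refine ⟨b - 1, by omega⟩
  exact (Nat.ModEq.cancel_left_of_coprime hco h3)

lemma nsmul_replicate_g {g : ZMod n} : ∀ m k : ℕ, m • replicate k g = replicate (m * k) g := by
  intro m k
  induction m with
  | zero => simp
  | succ m ih => rw [succ_nsmul, ih, ← replicate_add]; congr 1; ring

lemma two_mem_LengthSet (he : addOrderOf e = n) (hn : n = a ^ 2 + 1) (ha2 : 2 ≤ a) (hae : 2 ∣ a) :
    2 ∈ LengthSet (PMZS ({e, a • e} : Set (ZMod n))) (Mxy e a 2 (2 * a)) := by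
  refine ⟨[Mxy e a 1 a, Mxy e a 1 a], ?_, ?_, rfl⟩
  · intro A hA
    rcases List.mem_cons.mp hA with h | h
    · rw [h]; exact atom_M1a he hn ha2 hae
    rcases List.mem_cons.mp h with h' | h'
    · rw [h']; exact atom_M1a he hn ha2 hae
    · exact absurd h' List.not_mem_nil
  · show Mxy e a 1 a + (Mxy e a 1 a + 0) = Mxy e a 2 (2 * a)
    rw [add_zero, ← Mxy_add]
    congr 1 <;> omega

lemma succa_mem_LengthSet (he : addOrderOf e = n) (hn : n = a ^ 2 + 1) (ha2 : 2 ≤ a)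
    (hae : 2 ∣ a) :
    a + 1 ∈ LengthSet (PMZS ({e, a • e} : Set (ZMod n))) (Mxy e a 2 (2 * a)) := by
  refine ⟨Mxy e a 2 0 :: List.replicate a (Mxy e a 0 2), ?_, ?_, by simp [List.length_replicate]⟩
  · intro A hA
    rcases List.mem_cons.mp hA with h | h
    · rw [h]; exact atom_M20 he hn ha2 hae
    · rw [List.eq_of_mem_replicate h]; exact atom_M02 he hn ha2 hae
  · rw [List.sum_cons, List.sum_replicate]
    have h1 : Mxy e a 0 2 = replicate 2 (a • e) := by rw [Mxy, replicate_zero, zero_add]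
    have h2 : Mxy e a 2 0 = replicate 2 e := by rw [Mxy, replicate_zero, add_zero]
    rw [h1, h2, nsmul_replicate_g]
    show replicate 2 e + replicate (a * 2) (a • e) = Mxy e a 2 (2 * a)
    rw [Mxy]
    congr 1
    ring

lemma delta_mem (he : addOrderOf e = n) (hn : n = a ^ 2 + 1) (ha2 : 2 ≤ a) (hae : 2 ∣ a) :
    a - 1 ∈ DeltaM (PMZS ({e, a • e} : Set (ZMod n))) := by
  refine ⟨Mxy e a 2 (2 * a), (mem_PMZS_Mxy he hn ha2 _ _).mpr
    ⟨1, a, by omega, by omega, ⟨0, by push_cast; ring⟩⟩, by omega, 2,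
    two_mem_LengthSet he hn ha2 hae, ?_, ?_⟩
  · have h : 2 + (a - 1) = a + 1 := by omega
    rw [h]
    exact succa_mem_LengthSet he hn ha2 hae
  · intro b hb hlt
    have hcong := lengths_congr he hn ha2 hae hb (two_mem_LengthSet he hn ha2 hae)
    have hdvd : (a - 1) ∣ b - 2 := (Nat.modEq_iff_dvd' (by omega)).mp hcong.symm
    have : a - 1 ≤ b - 2 := Nat.le_of_dvd (by omega) hdvd
    omega

lemma delta_lb (he : addOrderOf e = n) (hn : n = a ^ 2 + 1) (ha2 : 2 ≤ a) (hae : 2 ∣ a) :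
    ∀ d ∈ DeltaM (PMZS ({e, a • e} : Set (ZMod n))), a - 1 ≤ d := by
  rintro d ⟨S, hS, hd0, k, hkL, hkdL, -⟩
  have hcong := lengths_congr he hn ha2 hae hkL hkdL
  have hdvd : (a - 1) ∣ (k + d) - k := (Nat.modEq_iff_dvd' (by omega)).mp hcong
  rw [Nat.add_sub_cancel_left] at hdvd
  exact Nat.le_of_dvd hd0 hdvd

lemma sInf_delta (he : addOrderOf e = n) (hn : n = a ^ 2 + 1) (ha2 : 2 ≤ a) (hae : 2 ∣ a) :
    sInf (DeltaM (PMZS ({e, a • e} : Set (ZMod n)))) = a - 1 :=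
  le_antisymm (Nat.sInf_le (delta_mem he hn ha2 hae))
    (le_csInf ⟨_, delta_mem he hn ha2 hae⟩ (delta_lb he hn ha2 hae))

lemma divclosed : IsDivClosed (PMZS (Set.univ : Set (ZMod n)))
    (PMZS ({e, a • e} : Set (ZMod n))) := by
  constructor
  · intro S hS
    exact ⟨fun g _ => trivial, (mem_PMZS.mp hS).2⟩
  · rintro s hs b hb ⟨c, -, hsc⟩
    refine ⟨fun g hg => (mem_PMZS.mp hs).1 g ?_, (mem_PMZS.mp hb).2⟩
    rw [hsc, Multiset.mem_add]
    exact Or.inl hg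


end Stmt9Aux

/-- Let `n` be odd with `n = a² + 1`. Then `a - 1 ∈ Δ*(B±(C_n))`; more precisely, for any
generator `e` of `C_n` and `G₀ = {e, a·e}`, one has `min Δ(B±(G₀)) = a - 1`. -/
theorem stmt_9 (n a : ℕ) (ha : 0 < a) (hodd : Odd n) (hn : n = a ^ 2 + 1) :
    a - 1 ∈ DeltaStar (PMZS (Set.univ : Set (ZMod n))) ∧
    ∀ e : ZMod n, addOrderOf e = n →
      sInf (DeltaM (PMZS ({e, a • e} : Set (ZMod n)))) = a - 1 := by
  have hae : 2 ∣ a := by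
    rcases Nat.even_or_odd a with h | h
    · exact h.two_dvd
    · exfalso
      obtain ⟨m, hm⟩ := h.pow (n := 2)
      obtain ⟨m', hm'⟩ := hodd
      omega
  have ha2 : 2 ≤ a := by
    obtain ⟨b, rfl⟩ := hae
    omega
  constructor
  · have he1 : addOrderOf (1 : ZMod n) = n := ZMod.addOrderOf_one n
    exact ⟨PMZS ({(1 : ZMod n), a • (1 : ZMod n)} : Set (ZMod n)), divclosed,
      ⟨a - 1, delta_mem he1 hn ha2 hae⟩, (sInf_delta he1 hn ha2 hae).symm⟩
  · intro e he
    exact sInf_delta he hn ha2 hae
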